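/- For the Łukasiewicz t-norm S_L(a,b) = max(a+b−1,0): for every capacity μ on a measurable space (X,𝒜), every measurable f : X → [0,1], and every a ∈ [0,1], I_{S_L}(μ, S_L(a,f)) = S_L(a, I_{S_L}(μ,f)). -/

import Mathlib

open unitInterval Set Filter Topology

instance : Fact ((0:ℝ) ≤ 1) := ⟨zero_le_one⟩

/-- A semicopula: nondecreasing in each coordinate, neutral element 1. -/
def IsSemicopula (S : I → I → I) : Prop :=
  (∀ x, S x 1 = x) ∧ (∀ x, S 1 x = x) ∧
  (∀ y, Monotone fun x => S x y) ∧ (∀ x, Monotone fun y => S x y)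

/-- A capacity: monotone set function with value 0 at ∅ and 1 at univ. -/
def IsCapacity {X : Type} [MeasurableSpace X] (μ : Set X → I) : Prop :=
  (∀ A B : Set X, MeasurableSet A → MeasurableSet B → A ⊆ B → μ A ≤ μ B) ∧
  μ (∅ : Set X) = 0 ∧ μ (univ : Set X) = 1

/-- The generalized Sugeno (seminormed fuzzy) integral. -/
noncomputable def sugeno {X : Type} [MeasurableSpace X] (S : I → I → I)
    (μ : Set X → I) (f : X → I) : I :=
  ⨆ t : I, S t (μ {x | t ≤ f x})

noncomputable def lukasiewicz (a b : I) : I :=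
  ⟨max (a.1 + b.1 - 1) 0,
    le_max_right _ _,
    max_le (by have := a.2.2; have := b.2.2; linarith) zero_le_one⟩

lemma luk_coe (a b : I) : (lukasiewicz a b : ℝ) = max (a.1 + b.1 - 1) 0 := rfl

lemma luk_set_eq {X : Type} (a t : I) (f : X → I) (ht : 0 < t.1) :
    {x | t ≤ lukasiewicz a (f x)} = {x : X | t.1 + 1 - a.1 ≤ (f x).1} := by
  ext x
  simp only [mem_setOf_eq, ← Subtype.coe_le_coe, luk_coe, le_max_iff]
  constructor
  · rintro (h | h)
    · linarith
    · linarith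
  · intro h; left; linarith

theorem lukasiewicz_property (X : Type) [MeasurableSpace X]
    (μ : Set X → I) (hμ : IsCapacity μ) (f : X → I) (hf : Measurable f) (a : I) :
    sugeno lukasiewicz μ (fun x => lukasiewicz a (f x))
      = lukasiewicz a (sugeno lukasiewicz μ f) := by
  obtain ⟨hmono, hempty, huniv⟩ := hμ
  set S : I := sugeno lukasiewicz μ f with hS
  apply le_antisymm
  · apply iSup_le
    intro t
    rw [← Subtype.coe_le_coe]
    rcases le_or_gt t.1 0 with ht | ht
    · refine le_trans ?_ (lukasiewicz a S).2.1
      rw [luk_coe]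
      have hb := (μ {x | t ≤ (fun x => lukasiewicz a (f x)) x}).2.2
      apply max_le (by linarith) le_rfl
    · rw [luk_set_eq a t f ht]
      rcases le_or_gt t.1 a.1 with hta | hta
      · -- 0 < t ≤ a
        set s : I := ⟨t.1 + 1 - a.1, by constructor <;> [skip; skip] <;>
          [linarith [t.2.1, a.2.2]; linarith]⟩ with hs
        have hsetf : {x : X | t.1 + 1 - a.1 ≤ (f x).1} = {x | s ≤ f x} := by
          ext x
          simp only [mem_setOf_eq, ← Subtype.coe_le_coe]
          rfl
        rw [hsetf]
        have hle : lukasiewicz s (μ {x | s ≤ f x}) ≤ S := by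
          rw [hS]; exact le_iSup (fun u : I => lukasiewicz u (μ {x | u ≤ f x})) s
        rw [← Subtype.coe_le_coe, luk_coe] at hle
        have h1 : s.1 + (μ {x | s ≤ f x}).1 - 1 ≤ S.1 :=
          le_trans (le_max_left _ _) hle
        rw [luk_coe, luk_coe]
        apply max_le _ (le_max_right _ _)
        have hs1 : s.1 = t.1 + 1 - a.1 := rfl
        refine le_trans ?_ (le_max_left _ _)
        linarith
      · -- a < t : the level set is empty
        have hsetf : {x : X | t.1 + 1 - a.1 ≤ (f x).1} = (∅ : Set X) := by
          ext x
          simp only [mem_setOf_eq, mem_empty_iff_false, iff_false, not_le]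
          have := (f x).2.2
          linarith
        rw [hsetf, hempty]
        refine le_trans ?_ (lukasiewicz a S).2.1
        rw [luk_coe]
        have ht1 := t.2.2
        apply max_le (by simp; linarith) le_rfl
  · rw [← Subtype.coe_le_coe, luk_coe]
    set T : I := ⨆ t : I, lukasiewicz t (μ {x | t ≤ (fun x => lukasiewicz a (f x)) x})
      with hT
    apply max_le _ T.2.1
    rcases le_or_gt (a.1 + S.1 - 1) 0 with h0 | h0
    · exact le_trans h0 T.2.1
    rcases lt_or_ge a.1 T.1 with haT | haT
    · have := S.2.2; linarith
    · -- T ≤ a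
      set c : I := ⟨T.1 + 1 - a.1, by
        constructor
        · linarith [T.2.1, a.2.2]
        · linarith⟩ with hc
      have hSc : S ≤ c := by
        rw [hS]
        apply iSup_le
        intro s
        rw [← Subtype.coe_le_coe, luk_coe]
        show max (s.1 + (μ {x | s ≤ f x}).1 - 1) 0 ≤ T.1 + 1 - a.1
        apply max_le _ (by linarith [T.2.1, a.2.2])
        rcases le_or_gt (s.1 + a.1 - 1) 0 with hsa | hsa
        · have := (μ {x | s ≤ f x}).2.2
          linarith [T.2.1]
        · set t : I := ⟨s.1 + a.1 - 1, le_of_lt hsa, by linarith [s.2.2, a.2.2]⟩ with htd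
          have ht0 : 0 < t.1 := hsa
          have hle : lukasiewicz t (μ {x | t ≤ (fun x => lukasiewicz a (f x)) x}) ≤ T := by
            rw [hT]
            exact le_iSup (fun u : I =>
              lukasiewicz u (μ {x | u ≤ (fun x => lukasiewicz a (f x)) x})) t
          have hset : {x | t ≤ (fun x => lukasiewicz a (f x)) x} = {x | s ≤ f x} := by
            simp only
            rw [luk_set_eq a t f ht0]
            ext x
            simp only [mem_setOf_eq, ← Subtype.coe_le_coe]
            have : t.1 + 1 - a.1 = s.1 := by rw [htd]; ring_nf
            rw [this]
          rw [hset, ← Subtype.coe_le_coe, luk_coe] at hle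
          have := le_trans (le_max_left (t.1 + (μ {x | s ≤ f x}).1 - 1) 0) hle
          have hts : t.1 = s.1 + a.1 - 1 := rfl
          linarith
      have := hSc
      rw [← Subtype.coe_le_coe] at this
      have hc1 : c.1 = T.1 + 1 - a.1 := rfl
      linarith
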